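/- The function H(x,y) = (x² + y²)³ / (b x³ - 1) is a first integral of the system ẋ = -y + b x³ y, ẏ = x + (b/2)x²y² - (b/2)x⁴ on the open set where bx³ ≠ 1. -/

import Mathlib

/-- H(x,y) = (x²+y²)³/(bx³-1) is a first integral of
ẋ = -y+bx³y, ẏ = x+(b/2)x²y²-(b/2)x⁴ wherever bx³ ≠ 1. -/
theorem stmt_2 (b : ℝ) :
    ∀ x y : ℝ, b * x ^ 3 ≠ 1 →
      (-y + b * x ^ 3 * y) *
        deriv (fun x' : ℝ => (x' ^ 2 + y ^ 2) ^ 3 / (b * x' ^ 3 - 1)) x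
      + (x + (b/2) * x ^ 2 * y ^ 2 - (b/2) * x ^ 4) *
        deriv (fun y' : ℝ => (x ^ 2 + y' ^ 2) ^ 3 / (b * x ^ 3 - 1)) y = 0 := by
  intro x y h
  have hv : b * x ^ 3 - 1 ≠ 0 := sub_ne_zero.mpr h
  have hu : HasDerivAt (fun x' : ℝ => (x' ^ 2 + y ^ 2) ^ 3)
      (3 * (x ^ 2 + y ^ 2) ^ 2 * (2 * x)) x := by
    have := ((hasDerivAt_pow 2 x).add_const (y ^ 2)).fun_pow 3
    simpa using this
  have hvv : HasDerivAt (fun x' : ℝ => b * x' ^ 3 - 1) (b * (3 * x ^ 2)) x := by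
    simpa using ((hasDerivAt_pow 3 x).const_mul b).sub_const 1
  have hdx := (hu.div hvv hv).deriv
  have huy : HasDerivAt (fun y' : ℝ => (x ^ 2 + y' ^ 2) ^ 3 / (b * x ^ 3 - 1))
      (3 * (x ^ 2 + y ^ 2) ^ 2 * (2 * y) / (b * x ^ 3 - 1)) y := by
    have := (((hasDerivAt_pow 2 y).const_add (x ^ 2)).pow 3).div_const (b * x ^ 3 - 1)
    simpa using this
  rw [show (fun x' : ℝ => (x' ^ 2 + y ^ 2) ^ 3 / (b * x' ^ 3 - 1)) = ((fun x' : ℝ => (x' ^ 2 + y ^ 2) ^ 3) / fun x' : ℝ => b * x' ^ 3 - 1) from rfl, hdx, huy.deriv]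
  field_simp
  ring
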